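/- Let k and N be natural numbers, let (R_w, m_w) be local rings whose maximal ideals are each generated by at most N elements and which each have k-bounded multiplication, and let (R, m) be their ultraproduct with respect to an ultrafilter 𝒰 on the infinite set W. Then the separated quotient R̃ := R/⋂_{n≥1} mⁿ has k-bounded multiplication and is an integral domain. -/

import Mathlib

/-- The ideal of the product ring consisting of families that vanish almost
everywhere with respect to the ultrafilter `𝒰`. -/
def almostZero {W : Type*} (𝒰 : Ultrafilter W) (R : W → Type*) [∀ w, CommRing (R w)] :
    Ideal (∀ w, R w) where
  carrier := {f | ∀ᶠ w in (𝒰 : Filter W), f w = 0}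
  zero_mem' := Filter.Eventually.of_forall fun _ => rfl
  add_mem' := by
    intro f g hf hg
    filter_upwards [hf, hg] with w h1 h2
    simp [h1, h2]
  smul_mem' := by
    intro c f hf
    filter_upwards [hf] with w h
    simp [h]

/-- The ultraproduct of a family of commutative rings with respect to an
ultrafilter: the product modulo the ideal of almost-everywhere-zero families. -/
abbrev Ultraproduct {W : Type*} (𝒰 : Ultrafilter W) (R : W → Type*) [∀ w, CommRing (R w)] :
    Type _ :=
  (∀ w, R w) ⧸ almostZero 𝒰 R

theorem isUnit_mk_iff {W : Type*} (𝒰 : Ultrafilter W) (R : W → Type*) [∀ w, CommRing (R w)]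
    (f : ∀ w, R w) :
    IsUnit (Ideal.Quotient.mk (almostZero 𝒰 R) f) ↔ ∀ᶠ w in (𝒰 : Filter W), IsUnit (f w) := by
  constructor
  · rintro ⟨u, hu⟩
    obtain ⟨g, hg⟩ := Ideal.Quotient.mk_surjective (↑u⁻¹ : Ultraproduct 𝒰 R)
    have h1 : Ideal.Quotient.mk (almostZero 𝒰 R) (f * g) =
        Ideal.Quotient.mk (almostZero 𝒰 R) 1 := by
      rw [map_mul, map_one, hg, ← hu, Units.mul_inv]
    have h2 : f * g - 1 ∈ almostZero 𝒰 R := Ideal.Quotient.eq.mp h1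
    filter_upwards [h2] with w hw
    have : f w * g w = 1 := by
      have : f w * g w - 1 = 0 := hw
      linear_combination this
    exact isUnit_iff_exists_inv.mpr ⟨_, this⟩
  · intro hf
    classical
    set g : ∀ w, R w := fun w => if h : IsUnit (f w) then ((h.unit⁻¹ : (R w)ˣ) : R w) else 0
      with hgdef
    have h1 : f * g - 1 ∈ almostZero 𝒰 R := by
      filter_upwards [hf] with w hw
      have : f w * g w = 1 := by
        simp only [hgdef, dif_pos hw]
        exact hw.mul_val_inv
      show f w * g w - 1 = 0
      rw [this, sub_self]
    have h2 : Ideal.Quotient.mk (almostZero 𝒰 R) f *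
        Ideal.Quotient.mk (almostZero 𝒰 R) g = 1 := by
      rw [← map_mul, ← map_one (Ideal.Quotient.mk (almostZero 𝒰 R))]
      exact Ideal.Quotient.eq.mpr h1
    exact isUnit_iff_exists_inv.mpr ⟨_, h2⟩

instance {W : Type*} (𝒰 : Ultrafilter W) (R : W → Type*) [∀ w, CommRing (R w)]
    [∀ w, Nontrivial (R w)] : Nontrivial (Ultraproduct 𝒰 R) := by
  refine ⟨0, 1, fun h => ?_⟩
  have h1 : (0 : ∀ w, R w) - 1 ∈ almostZero 𝒰 R := Ideal.Quotient.eq.mp h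
  have h2 : ∀ᶠ w in (𝒰 : Filter W), (0 : R w) - 1 = 0 := h1
  obtain ⟨w, hw⟩ := h2.exists
  exact one_ne_zero (by linear_combination -hw)

instance {W : Type*} (𝒰 : Ultrafilter W) (R : W → Type*) [∀ w, CommRing (R w)]
    [∀ w, IsLocalRing (R w)] : IsLocalRing (Ultraproduct 𝒰 R) := by
  refine IsLocalRing.of_nonunits_add ?_
  intro a b ha hb
  obtain ⟨f, rfl⟩ := Ideal.Quotient.mk_surjective a
  obtain ⟨g, rfl⟩ := Ideal.Quotient.mk_surjective b
  rw [mem_nonunits_iff, isUnit_mk_iff, ← Ultrafilter.eventually_not] at ha hb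
  rw [mem_nonunits_iff, ← map_add, isUnit_mk_iff, ← Ultrafilter.eventually_not]
  filter_upwards [ha, hb] with w h1 h2
  exact fun h => (IsLocalRing.nonunits_add h1 h2) h

/-- The ideal of infinitesimals of a local ring: the intersection of all powers
of the maximal ideal. -/
def infinitesimals (A : Type*) [CommRing A] [IsLocalRing A] : Ideal A :=
  ⨅ n : ℕ, IsLocalRing.maximalIdeal A ^ (n + 1)

/-- The order of an element with respect to an ideal: the supremum of all `n`
with `a ∈ m ^ n`. -/
noncomputable def ordIdeal {A : Type*} [CommRing A] (m : Ideal A) (a : A) : ℕ∞ :=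
  sSup ((fun n : ℕ => (n : ℕ∞)) '' {n : ℕ | a ∈ m ^ n})

/-- A ring has `k`-bounded multiplication with respect to an ideal `m` if
`ord (a * b) ≤ k * max (ord a) (ord b)` whenever the right-hand side is finite. -/
def KBoundedMul {A : Type*} [CommRing A] (m : Ideal A) (k : ℕ) : Prop :=
  ∀ a b : A, ordIdeal m a ≠ ⊤ → ordIdeal m b ≠ ⊤ →
    ordIdeal m (a * b) ≤ (k : ℕ∞) * max (ordIdeal m a) (ordIdeal m b)

section OrdAux

variable {A : Type*} [CommRing A]

lemma le_ordIdeal_of_mem {m : Ideal A} {a : A} {n : ℕ} (h : a ∈ m ^ n) :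
    (n : ℕ∞) ≤ ordIdeal m a :=
  le_sSup ⟨n, h, rfl⟩

lemma ordIdeal_le_of_not_mem {m : Ideal A} {a : A} {n : ℕ} (h : a ∉ m ^ (n + 1)) :
    ordIdeal m a ≤ (n : ℕ∞) := by
  apply sSup_le
  rintro x ⟨j, hj, rfl⟩
  by_contra hx
  push_neg at hx
  have hjn : n + 1 ≤ j := by exact_mod_cast hx
  exact h (Ideal.pow_le_pow_right hjn hj)

lemma ordIdeal_eq {m : Ideal A} {a : A} {n : ℕ} (h1 : a ∈ m ^ n) (h2 : a ∉ m ^ (n + 1)) :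
    ordIdeal m a = (n : ℕ∞) :=
  le_antisymm (ordIdeal_le_of_not_mem h2) (le_ordIdeal_of_mem h1)

lemma exists_ord_level {m : Ideal A} {a : A} {n : ℕ} (h : a ∉ m ^ n) :
    ∃ d, a ∈ m ^ d ∧ a ∉ m ^ (d + 1) := by
  classical
  have h0 : a ∈ m ^ 0 := by simp [Ideal.one_eq_top]
  have hex : ∃ j, a ∉ m ^ j := ⟨n, h⟩
  have hj : a ∉ m ^ (Nat.find hex) := Nat.find_spec hex
  have hj0 : Nat.find hex ≠ 0 := by
    intro e; rw [e] at hj; exact hj h0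
  obtain ⟨d, hd⟩ := Nat.exists_eq_succ_of_ne_zero hj0
  refine ⟨d, ?_, ?_⟩
  · exact not_not.mp (Nat.find_min hex (by omega))
  · rw [← Nat.succ_eq_add_one, ← hd]; exact hj

lemma exists_of_ordIdeal_ne_top {m : Ideal A} {a : A} (h : ordIdeal m a ≠ ⊤) :
    ∃ d, a ∈ m ^ d ∧ a ∉ m ^ (d + 1) := by
  by_contra hc
  push_neg at hc
  have hall : ∀ n, a ∈ m ^ n := by
    intro n
    induction n with
    | zero => simp [Ideal.one_eq_top]
    | succ n ih => exact hc n ih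
  lift ordIdeal m a to ℕ using h with t ht
  have h1 : ((t + 1 : ℕ) : ℕ∞) ≤ (t : ℕ∞) := ht ▸ le_ordIdeal_of_mem (hall (t + 1))
  have h2 : t + 1 ≤ t := by exact_mod_cast h1
  omega

lemma pow_le_span_monomials {N : ℕ} (x : Fin N → A) (n : ℕ) :
    (Ideal.span (Set.range x)) ^ n ≤
      Ideal.span (Set.range fun ι : Fin n → Fin N => ∏ i, x (ι i)) := by
  induction n with
  | zero =>
    have h1 : (1 : A) ∈ Ideal.span (Set.range fun ι : Fin 0 → Fin N => ∏ i, x (ι i)) :=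
      Ideal.subset_span ⟨fun i => i.elim0, by simp⟩
    rw [pow_zero, Ideal.one_eq_top]
    exact le_of_eq ((Ideal.eq_top_iff_one _).mpr h1).symm
  | succ n ih =>
    have key : Ideal.span (Set.range fun ι : Fin n → Fin N => ∏ i, x (ι i)) *
        Ideal.span (Set.range x) ≤
        Ideal.span (Set.range fun ι : Fin (n + 1) → Fin N => ∏ i, x (ι i)) := by
      rw [Ideal.span_mul_span]
      refine Ideal.span_le.mpr ?_
      rintro a ha
      simp only [Set.mem_mul] at ha
      obtain ⟨s, ⟨⟨ι, rfl⟩, t, ⟨⟨j, rfl⟩, rfl⟩⟩⟩ := ha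
      refine Ideal.subset_span ⟨Fin.cons j ι, ?_⟩
      simp only [Fin.prod_univ_succ, Fin.cons_zero, Fin.cons_succ]
      ring
    rw [pow_succ]
    exact Ideal.mul_le.mpr fun r hr t ht => key (Ideal.mul_mem_mul (ih hr) ht)

end OrdAux

set_option maxHeartbeats 1000000
set_option synthInstance.maxHeartbeats 400000

section UltraAux

variable {W : Type*} (𝒰 : Ultrafilter W) (R : W → Type*) [∀ w, CommRing (R w)]
  [∀ w, IsLocalRing (R w)]

lemma mk_mem_maximalIdeal_iff (f : ∀ w, R w) :
    Ideal.Quotient.mk (almostZero 𝒰 R) f ∈ IsLocalRing.maximalIdeal (Ultraproduct 𝒰 R) ↔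
      ∀ᶠ w in (𝒰 : Filter W), f w ∈ IsLocalRing.maximalIdeal (R w) := by
  simp only [IsLocalRing.mem_maximalIdeal, mem_nonunits_iff]
  rw [Ultrafilter.eventually_not, isUnit_mk_iff]

/-- Families that lie in the `n`-th power of the maximal ideal almost everywhere. -/
def aePow (n : ℕ) : Ideal (∀ w, R w) where
  carrier := {f | ∀ᶠ w in (𝒰 : Filter W), f w ∈ IsLocalRing.maximalIdeal (R w) ^ n}
  zero_mem' := Filter.Eventually.of_forall fun w => by
    simp
  add_mem' := by
    intro f g hf hg
    filter_upwards [hf, hg] with w h1 h2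
    exact Ideal.add_mem _ h1 h2
  smul_mem' := by
    intro c f hf
    filter_upwards [hf] with w h
    exact Ideal.mul_mem_left _ _ h

lemma aePow_one_pow_le (n : ℕ) : (aePow 𝒰 R 1) ^ n ≤ aePow 𝒰 R n := by
  induction n with
  | zero =>
    intro f _
    exact Filter.Eventually.of_forall fun w => by simp [Ideal.one_eq_top]
  | succ n ih =>
    rw [pow_succ]
    refine Ideal.mul_le.mpr fun r hr s hs => ?_
    have hr' := ih hr
    show r * s ∈ aePow 𝒰 R (n + 1)
    have hs' : ∀ᶠ w in (𝒰 : Filter W), s w ∈ IsLocalRing.maximalIdeal (R w) ^ 1 := hs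
    have hr'' : ∀ᶠ w in (𝒰 : Filter W), r w ∈ IsLocalRing.maximalIdeal (R w) ^ n := hr'
    filter_upwards [hr'', hs'] with w h1 h2
    rw [pow_succ]
    exact Ideal.mul_mem_mul h1 (by simpa using h2)

lemma mk_mem_pow_iff
    (hgen : ∀ w, ∃ x : Fin N → R w,
      Ideal.span (Set.range x) = IsLocalRing.maximalIdeal (R w))
    (n : ℕ) (f : ∀ w, R w) :
    Ideal.Quotient.mk (almostZero 𝒰 R) f ∈ IsLocalRing.maximalIdeal (Ultraproduct 𝒰 R) ^ n ↔
      ∀ᶠ w in (𝒰 : Filter W), f w ∈ IsLocalRing.maximalIdeal (R w) ^ n := by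
  classical
  set q := Ideal.Quotient.mk (almostZero 𝒰 R) with hq
  constructor
  · intro hf
    have h1 : IsLocalRing.maximalIdeal (Ultraproduct 𝒰 R) ≤ Ideal.map q (aePow 𝒰 R 1) := by
      intro a ha
      obtain ⟨g, rfl⟩ := Ideal.Quotient.mk_surjective a
      have hg1 : g ∈ aePow 𝒰 R 1 := by
        have hgm := (mk_mem_maximalIdeal_iff 𝒰 R g).mp ha
        show ∀ᶠ w in (𝒰 : Filter W), g w ∈ IsLocalRing.maximalIdeal (R w) ^ 1
        filter_upwards [hgm] with w hw
        simpa using hw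
      exact Ideal.mem_map_of_mem q hg1
    have h2 : IsLocalRing.maximalIdeal (Ultraproduct 𝒰 R) ^ n ≤ Ideal.map q (aePow 𝒰 R n) := by
      calc IsLocalRing.maximalIdeal (Ultraproduct 𝒰 R) ^ n
          ≤ (Ideal.map q (aePow 𝒰 R 1)) ^ n := Ideal.pow_right_mono h1 n
        _ = Ideal.map q ((aePow 𝒰 R 1) ^ n) := (Ideal.map_pow q _ n).symm
        _ ≤ Ideal.map q (aePow 𝒰 R n) := Ideal.map_mono (aePow_one_pow_le 𝒰 R n)
    obtain ⟨g, hg, hgf⟩ := (Ideal.mem_map_iff_of_surjective q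
      Ideal.Quotient.mk_surjective).mp (h2 hf)
    have hdiff : g - f ∈ almostZero 𝒰 R := Ideal.Quotient.eq.mp hgf
    have hg' : ∀ᶠ w in (𝒰 : Filter W), g w ∈ IsLocalRing.maximalIdeal (R w) ^ n := hg
    filter_upwards [hg', hdiff] with w h1 h2
    have h3 : g w - f w = 0 := h2
    have h4 : f w = g w := by linear_combination -h3
    rw [h4]; exact h1
  · intro hf
    set x : ∀ w, Fin N → R w := fun w => (hgen w).choose with hx
    have hxspan : ∀ w, Ideal.span (Set.range (x w)) = IsLocalRing.maximalIdeal (R w) :=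
      fun w => (hgen w).choose_spec
    have hxm : ∀ w j, x w j ∈ IsLocalRing.maximalIdeal (R w) := fun w j => by
      rw [← hxspan w]; exact Ideal.subset_span ⟨j, rfl⟩
    -- monomial families
    have hmono : ∀ ι : Fin n → Fin N,
        q (fun w => ∏ i, x w (ι i)) ∈ IsLocalRing.maximalIdeal (Ultraproduct 𝒰 R) ^ n := by
      intro ι
      have heq : (fun w => ∏ i, x w (ι i)) = ∏ i : Fin n, (fun w => x w (ι i)) := by
        funext w
        rw [Finset.prod_apply]
      rw [heq, map_prod]
      have := Ideal.prod_mem_prod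
        (I := fun _ : Fin n => IsLocalRing.maximalIdeal (Ultraproduct 𝒰 R))
        (s := Finset.univ) (x := fun i => q (fun w => x w (ι i)))
        (fun i _ => (mk_mem_maximalIdeal_iff 𝒰 R _).mpr
          (Filter.Eventually.of_forall fun w => hxm w (ι i)))
      simpa [Finset.prod_const] using this
    -- coefficients
    have hrep : ∀ᶠ w in (𝒰 : Filter W),
        ∃ c : (Fin n → Fin N) → R w, ∑ ι, c ι • ∏ i, x w (ι i) = f w := by
      filter_upwards [hf] with w hw
      have : f w ∈ Ideal.span (Set.range fun ι : Fin n → Fin N => ∏ i, x w (ι i)) := by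
        apply pow_le_span_monomials (x w) n
        rw [hxspan w]; exact hw
      exact (Submodule.mem_span_range_iff_exists_fun _).mp this
    set c : ∀ w, (Fin n → Fin N) → R w := fun w =>
      if h : ∃ c : (Fin n → Fin N) → R w, ∑ ι, c ι • ∏ i, x w (ι i) = f w
      then h.choose else 0 with hcdef
    have hc : ∀ᶠ w in (𝒰 : Filter W), ∑ ι, c w ι • ∏ i, x w (ι i) = f w := by
      filter_upwards [hrep] with w hw
      simp only [hcdef, dif_pos hw]
      exact hw.choose_spec
    have hdiff : (∑ ι : Fin n → Fin N, (fun w => c w ι) * (fun w => ∏ i, x w (ι i))) - f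
        ∈ almostZero 𝒰 R := by
      filter_upwards [hc] with w hw
      show (∑ ι : Fin n → Fin N, (fun w => c w ι) * (fun w => ∏ i, x w (ι i))) w - f w = 0
      rw [Finset.sum_apply]
      simp only [Pi.mul_apply]
      rw [sub_eq_zero, ← hw]
      simp [smul_eq_mul]
    have : q f = q (∑ ι : Fin n → Fin N, (fun w => c w ι) * (fun w => ∏ i, x w (ι i))) :=
      (Ideal.Quotient.eq.mpr hdiff).symm
    rw [this, map_sum]
    refine Ideal.sum_mem _ fun ι _ => ?_
    rw [map_mul]
    exact Ideal.mul_mem_left _ _ (hmono ι)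

end UltraAux

section Main

variable {W : Type*} (𝒰 : Ultrafilter W) (R : W → Type*) [∀ w, CommRing (R w)]
  [∀ w, IsLocalRing (R w)]

lemma ultraproduct_kbounded {k N : ℕ}
    (hgen : ∀ w, ∃ x : Fin N → R w,
      Ideal.span (Set.range x) = IsLocalRing.maximalIdeal (R w))
    (hk : ∀ w, KBoundedMul (IsLocalRing.maximalIdeal (R w)) k) :
    KBoundedMul (IsLocalRing.maximalIdeal (Ultraproduct 𝒰 R)) k := by
  intro a b ha hb
  obtain ⟨d, hd1, hd2⟩ := exists_of_ordIdeal_ne_top ha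
  obtain ⟨e, he1, he2⟩ := exists_of_ordIdeal_ne_top hb
  obtain ⟨f, rfl⟩ := Ideal.Quotient.mk_surjective a
  obtain ⟨g, rfl⟩ := Ideal.Quotient.mk_surjective b
  set M := k * max d e with hM
  have hfd : ∀ᶠ w in (𝒰 : Filter W), f w ∈ IsLocalRing.maximalIdeal (R w) ^ d :=
    (mk_mem_pow_iff 𝒰 R hgen d f).mp hd1
  have hfd' : ∀ᶠ w in (𝒰 : Filter W), f w ∉ IsLocalRing.maximalIdeal (R w) ^ (d + 1) :=
    Ultrafilter.eventually_not.mpr fun h => hd2 ((mk_mem_pow_iff 𝒰 R hgen (d + 1) f).mpr h)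
  have hge : ∀ᶠ w in (𝒰 : Filter W), g w ∈ IsLocalRing.maximalIdeal (R w) ^ e :=
    (mk_mem_pow_iff 𝒰 R hgen e g).mp he1
  have hge' : ∀ᶠ w in (𝒰 : Filter W), g w ∉ IsLocalRing.maximalIdeal (R w) ^ (e + 1) :=
    Ultrafilter.eventually_not.mpr fun h => he2 ((mk_mem_pow_iff 𝒰 R hgen (e + 1) g).mpr h)
  have key : ∀ᶠ w in (𝒰 : Filter W),
      f w * g w ∉ IsLocalRing.maximalIdeal (R w) ^ (M + 1) := by
    filter_upwards [hfd, hfd', hge, hge'] with w h1 h2 h3 h4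
    intro hmem
    have hof : ordIdeal (IsLocalRing.maximalIdeal (R w)) (f w) = (d : ℕ∞) := ordIdeal_eq h1 h2
    have hog : ordIdeal (IsLocalRing.maximalIdeal (R w)) (g w) = (e : ℕ∞) := ordIdeal_eq h3 h4
    have hb := hk w (f w) (g w) (by rw [hof]; exact (by simp : ((d : ℕ) : ℕ∞) ≠ ⊤))
      (by rw [hog]; exact (by simp : ((e : ℕ) : ℕ∞) ≠ ⊤))
    rw [hof, hog] at hb
    have hub : ordIdeal (IsLocalRing.maximalIdeal (R w)) (f w * g w) ≤ (M : ℕ∞) := by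
      refine hb.trans (le_of_eq ?_)
      rw [hM]
      push_cast [Nat.cast_max]
      rfl
    have hlb := le_ordIdeal_of_mem hmem
    have : ((M + 1 : ℕ) : ℕ∞) ≤ (M : ℕ∞) := le_trans hlb hub
    exact absurd (by exact_mod_cast this) (Nat.not_succ_le_self M)
  have hnot : Ideal.Quotient.mk (almostZero 𝒰 R) f * Ideal.Quotient.mk (almostZero 𝒰 R) g
      ∉ IsLocalRing.maximalIdeal (Ultraproduct 𝒰 R) ^ (M + 1) := by
    rw [← map_mul, mk_mem_pow_iff 𝒰 R hgen]
    intro hmem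
    obtain ⟨w, hw1, hw2⟩ := (key.and hmem).exists
    exact hw1 hw2
  have hord := ordIdeal_le_of_not_mem hnot
  rw [ordIdeal_eq hd1 hd2, ordIdeal_eq he1 he2]
  refine hord.trans (le_of_eq ?_)
  rw [hM]
  push_cast [Nat.cast_max]
  rfl

lemma infinitesimals_le_pow (A : Type*) [CommRing A] [IsLocalRing A] (n : ℕ) :
    infinitesimals A ≤ IsLocalRing.maximalIdeal A ^ n :=
  (iInf_le _ n).trans (Ideal.pow_le_pow_right (Nat.le_succ n))

end Main

/-- The separated quotient of an ultraproduct of local rings of bounded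
embedding dimension with `k`-bounded multiplication again has `k`-bounded
multiplication and is an integral domain. -/
theorem stmt_19 (k N : ℕ) {W : Type*} [Infinite W] (𝒰 : Ultrafilter W)
    (R : W → Type*) [∀ w, CommRing (R w)] [∀ w, IsLocalRing (R w)]
    (hgen : ∀ w, ∃ x : Fin N → R w,
      Ideal.span (Set.range x) = IsLocalRing.maximalIdeal (R w))
    (hk : ∀ w, KBoundedMul (IsLocalRing.maximalIdeal (R w)) k) :
    ∃ h : IsLocalRing (Ultraproduct 𝒰 R ⧸ infinitesimals (Ultraproduct 𝒰 R)),
      KBoundedMul (@IsLocalRing.maximalIdeal _ _ h) k ∧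
      IsDomain (Ultraproduct 𝒰 R ⧸ infinitesimals (Ultraproduct 𝒰 R)) := by
  classical
  have hInotTop : infinitesimals (Ultraproduct 𝒰 R) ≠ ⊤ := by
    intro h
    have h1 : (1 : Ultraproduct 𝒰 R) ∈ infinitesimals (Ultraproduct 𝒰 R) :=
      h ▸ Submodule.mem_top
    have h2 : (1 : Ultraproduct 𝒰 R) ∈ IsLocalRing.maximalIdeal (Ultraproduct 𝒰 R) := by
      have := infinitesimals_le_pow (Ultraproduct 𝒰 R) 1 h1
      rwa [pow_one] at this
    exact (IsLocalRing.maximalIdeal.isMaximal _).ne_top ((Ideal.eq_top_iff_one _).mpr h2)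
  haveI hNT : Nontrivial (Ultraproduct 𝒰 R ⧸ infinitesimals (Ultraproduct 𝒰 R)) :=
    Ideal.Quotient.nontrivial_iff.mpr hInotTop
  haveI hB : IsLocalRing (Ultraproduct 𝒰 R ⧸ infinitesimals (Ultraproduct 𝒰 R)) :=
    IsLocalRing.of_surjective' (Ideal.Quotient.mk _) Ideal.Quotient.mk_surjective
  haveI : IsLocalHom (Ideal.Quotient.mk (infinitesimals (Ultraproduct 𝒰 R))) :=
    IsLocalHom.of_surjective _ Ideal.Quotient.mk_surjective
  have hmap : Ideal.map (Ideal.Quotient.mk (infinitesimals (Ultraproduct 𝒰 R)))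
      (IsLocalRing.maximalIdeal (Ultraproduct 𝒰 R)) =
      IsLocalRing.maximalIdeal (Ultraproduct 𝒰 R ⧸ infinitesimals (Ultraproduct 𝒰 R)) := by
    have hcomap : Ideal.comap (Ideal.Quotient.mk (infinitesimals (Ultraproduct 𝒰 R)))
        (IsLocalRing.maximalIdeal (Ultraproduct 𝒰 R ⧸ infinitesimals (Ultraproduct 𝒰 R))) =
        IsLocalRing.maximalIdeal (Ultraproduct 𝒰 R) :=
      ((IsLocalRing.local_hom_TFAE
        (Ideal.Quotient.mk (infinitesimals (Ultraproduct 𝒰 R)))).out 0 4).mp ‹_›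
    rw [← hcomap, Ideal.map_comap_of_surjective _ Ideal.Quotient.mk_surjective]
  have hmem : ∀ (a : Ultraproduct 𝒰 R) (n : ℕ),
      Ideal.Quotient.mk (infinitesimals (Ultraproduct 𝒰 R)) a ∈
        IsLocalRing.maximalIdeal (Ultraproduct 𝒰 R ⧸ infinitesimals (Ultraproduct 𝒰 R)) ^ n ↔
      a ∈ IsLocalRing.maximalIdeal (Ultraproduct 𝒰 R) ^ n := by
    intro a n
    rw [← hmap, ← Ideal.map_pow]
    constructor
    · intro h
      obtain ⟨y, hy, hya⟩ :=
        (Ideal.mem_map_iff_of_surjective _ Ideal.Quotient.mk_surjective).mp h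
      have hd : y - a ∈ infinitesimals (Ultraproduct 𝒰 R) := Ideal.Quotient.eq.mp hya
      have : a = y - (y - a) := by ring
      rw [this]
      exact Submodule.sub_mem _ hy (infinitesimals_le_pow _ n hd)
    · exact fun h => Ideal.mem_map_of_mem _ h
  have hordeq : ∀ a : Ultraproduct 𝒰 R,
      ordIdeal (IsLocalRing.maximalIdeal (Ultraproduct 𝒰 R ⧸ infinitesimals (Ultraproduct 𝒰 R)))
        (Ideal.Quotient.mk (infinitesimals (Ultraproduct 𝒰 R)) a) =
      ordIdeal (IsLocalRing.maximalIdeal (Ultraproduct 𝒰 R)) a := by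
    intro a
    unfold ordIdeal
    exact congrArg sSup (congrArg (fun s : Set ℕ => (fun n : ℕ => (n : ℕ∞)) '' s)
      (Set.ext fun n => hmem a n))
  have hKA := ultraproduct_kbounded 𝒰 R hgen hk
  refine ⟨hB, ?_, ?_⟩
  · intro a b ha hb
    obtain ⟨a, rfl⟩ := Ideal.Quotient.mk_surjective a
    obtain ⟨b, rfl⟩ := Ideal.Quotient.mk_surjective b
    rw [hordeq] at ha hb
    rw [← map_mul, hordeq, hordeq, hordeq]
    exact hKA a b ha hb
  · haveI : NoZeroDivisors (Ultraproduct 𝒰 R ⧸ infinitesimals (Ultraproduct 𝒰 R)) := by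
      constructor
      intro a b hab
      by_contra hcon
      push_neg at hcon
      obtain ⟨ha, hb⟩ := hcon
      obtain ⟨a, rfl⟩ := Ideal.Quotient.mk_surjective a
      obtain ⟨b, rfl⟩ := Ideal.Quotient.mk_surjective b
      have ha' : a ∉ infinitesimals (Ultraproduct 𝒰 R) :=
        fun h => ha (Ideal.Quotient.eq_zero_iff_mem.mpr h)
      have hb' : b ∉ infinitesimals (Ultraproduct 𝒰 R) :=
        fun h => hb (Ideal.Quotient.eq_zero_iff_mem.mpr h)
      obtain ⟨na, hna⟩ : ∃ n, a ∉ IsLocalRing.maximalIdeal (Ultraproduct 𝒰 R) ^ (n + 1) := by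
        by_contra h
        push_neg at h
        exact ha' (Ideal.mem_iInf.mpr fun n => h n)
      obtain ⟨nb, hnb⟩ : ∃ n, b ∉ IsLocalRing.maximalIdeal (Ultraproduct 𝒰 R) ^ (n + 1) := by
        by_contra h
        push_neg at h
        exact hb' (Ideal.mem_iInf.mpr fun n => h n)
      obtain ⟨d, hd1, hd2⟩ := exists_ord_level hna
      obtain ⟨e, he1, he2⟩ := exists_ord_level hnb
      have hfa : ordIdeal (IsLocalRing.maximalIdeal (Ultraproduct 𝒰 R)) a ≠ ⊤ := by
        rw [ordIdeal_eq hd1 hd2]; simp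
      have hfb : ordIdeal (IsLocalRing.maximalIdeal (Ultraproduct 𝒰 R)) b ≠ ⊤ := by
        rw [ordIdeal_eq he1 he2]; simp
      have hbd := hKA a b hfa hfb
      rw [ordIdeal_eq hd1 hd2, ordIdeal_eq he1 he2] at hbd
      have hmemI : a * b ∈ infinitesimals (Ultraproduct 𝒰 R) :=
        Ideal.Quotient.eq_zero_iff_mem.mp (by rw [map_mul]; exact hab)
      have h1 : ((k * max d e + 1 : ℕ) : ℕ∞) ≤
          ordIdeal (IsLocalRing.maximalIdeal (Ultraproduct 𝒰 R)) (a * b) :=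
        le_ordIdeal_of_mem (infinitesimals_le_pow _ (k * max d e + 1) hmemI)
      have h2 : ordIdeal (IsLocalRing.maximalIdeal (Ultraproduct 𝒰 R)) (a * b) ≤
          ((k * max d e : ℕ) : ℕ∞) := by
        refine hbd.trans (le_of_eq ?_)
        push_cast [Nat.cast_max]
        rfl
      exact absurd (by exact_mod_cast h1.trans h2) (Nat.not_succ_le_self (k * max d e))
    exact NoZeroDivisors.to_isDomain _
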